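/- arXiv:1003.2951 — 4 statements merged into one kernel-verified Lean document; each statement's English description precedes it below -/
import Mathlib

section
/- Let 1 ≤ d ≤ 6. Every saturated Borel ideal I ⊆ K[x_0,x_1,x_2] whose Hilbert polynomial is the constant polynomial d is a hilb-segment ideal with respect to some term order; that is, there exists a term order ≺ such that I ∩ 𝕋_d is a segment with respect to ≺ (here d is the Gotzmann number of the constant polynomial d). -/
open Polynomial

/-- Exponent vectors of monomials (terms) of `S = K[x_0, …, x_n]`. -/
abbrev Expo (n : ℕ) := Fin (n + 1) → ℕ

/-- The degree of a term. -/
def deg {n : ℕ} (α : Expo n) : ℕ := ∑ i, α i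

/-- The exponent vector of the variable `x_i`. -/
def sing {n : ℕ} (i : Fin (n + 1)) : Expo n := Pi.single i 1

/-- `MoveDown α β` : the term `α` is obtained from `β` by an elementary move `e_j^-`,
i.e. `α = x_{j-1}·β/x_j` for some `j ≥ 1` with `β_j > 0`. -/
def MoveDown {n : ℕ} (α β : Expo n) : Prop :=
  ∃ j k : Fin (n + 1), (k : ℕ) + 1 = (j : ℕ) ∧ α + sing j = β + sing k

/-- The Borel (partial) order `α <_B β` : transitive closure of elementary moves `e_j^-`. -/
def BorelLt {n : ℕ} (α β : Expo n) : Prop := Relation.TransGen MoveDown α β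

/-- A Borel set: a set of terms closed upwards under the Borel order. -/
def IsBorelSet {n : ℕ} (B : Set (Expo n)) : Prop :=
  ∀ α β : Expo n, α ∈ B → MoveDown α β → β ∈ B

/-- A monomial ideal, identified with its set of terms: closed under multiplication
by arbitrary terms. -/
def IsMonIdeal {n : ℕ} (M : Set (Expo n)) : Prop :=
  ∀ α ∈ M, ∀ γ : Expo n, α + γ ∈ M

/-- A Borel ideal: a monomial ideal which is a Borel set in every degree. -/
def IsBorelIdeal {n : ℕ} (M : Set (Expo n)) : Prop :=
  IsMonIdeal M ∧ IsBorelSet M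

/-- `𝒩(M)_t` : the set of degree-`t` terms not lying in `M`. -/
def coIdeal {n : ℕ} (M : Set (Expo n)) (t : ℕ) : Set (Expo n) :=
  {α | deg α = t ∧ α ∉ M}

/-- `p` is the Hilbert polynomial of `S/M` : `|𝒩(M)_t| = p(t)` for all `t` large. -/
def HasHilbPoly {n : ℕ} (M : Set (Expo n)) (p : Polynomial ℚ) : Prop :=
  ∃ N : ℕ, ∀ t : ℕ, N ≤ t → ((coIdeal M t).ncard : ℚ) = p.eval (t : ℚ)

/-- Saturation for monomial ideals: a term `α` with `x_i^{k_i}·α ∈ M` for suitable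
powers of every variable already lies in `M`. -/
def IsSaturatedIdeal {n : ℕ} (M : Set (Expo n)) : Prop :=
  ∀ α : Expo n, (∀ i : Fin (n + 1), ∃ k : ℕ, α + k • sing i ∈ M) → α ∈ M

/-- A term order on the terms of `S`: a multiplicative (strict) total order with `1`
as least element and `x_0 ≺ x_1 ≺ … ≺ x_n`. -/
structure TermOrder (n : ℕ) where
  lt : Expo n → Expo n → Prop
  irrefl : ∀ a : Expo n, ¬ lt a a
  trans : ∀ a b c : Expo n, lt a b → lt b c → lt a c
  total : ∀ a b : Expo n, a ≠ b → lt a b ∨ lt b a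
  add_right : ∀ a b c : Expo n, lt a b → lt (a + c) (b + c)
  zero_lt : ∀ a : Expo n, a ≠ 0 → lt 0 a
  var_lt : ∀ i j : Fin (n + 1), i < j → lt (sing i) (sing j)

/-- `M ∩ 𝕋_t` is a segment w.r.t. the order `lt`. -/
def IsSegmentAt {n : ℕ} (lt : Expo n → Expo n → Prop) (M : Set (Expo n)) (t : ℕ) : Prop :=
  ∀ τ σ : Expo n, τ ∈ M → deg τ = t → deg σ = t → lt τ σ → σ ∈ M

/-- `M` is a segment ideal w.r.t. the order `lt`. -/
def IsSegmentIdeal {n : ℕ} (lt : Expo n → Expo n → Prop) (M : Set (Expo n)) : Prop :=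
  ∀ t : ℕ, IsSegmentAt lt M t

/-- `α` is a minimal monomial generator of the monomial ideal `M`. -/
def IsMinGen {n : ℕ} (M : Set (Expo n)) (α : Expo n) : Prop :=
  α ∈ M ∧ ∀ β γ : Expo n, β + γ = α → β ∈ M → γ = 0

/-- The ideal generated by the elements of `M` of degree `≤ s - 1`. -/
def genBelow {n : ℕ} (M : Set (Expo n)) (s : ℕ) : Set (Expo n) :=
  {x | ∃ α γ : Expo n, α ∈ M ∧ deg α < s ∧ x = α + γ}

/-- `M` is a gen-segment ideal w.r.t. `lt`: for every `s` the minimal generators of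
degree `s` are the greatest among the degree-`s` terms not in `⟨M_{≤ s-1}⟩`. -/
def IsGenSegment {n : ℕ} (lt : Expo n → Expo n → Prop) (M : Set (Expo n)) : Prop :=
  ∀ α : Expo n, IsMinGen M α → ∀ σ : Expo n, deg σ = deg α →
    σ ∉ genBelow M (deg α) → ¬ IsMinGen M σ → lt σ α

/-- `δ` is the maximal degree of a minimal monomial generator of `M`. -/
def IsMaxGenDeg {n : ℕ} (M : Set (Expo n)) (δ : ℕ) : Prop :=
  (∃ α : Expo n, IsMinGen M α ∧ deg α = δ) ∧ ∀ α : Expo n, IsMinGen M α → deg α ≤ δ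

/-- `p` is an admissible polynomial with Gotzmann decomposition of length `r`
(so `r` is its Gotzmann number):
`p(z) = ∑_{i=1}^{r} binom(z + a_i - (i-1), a_i)` with `a_1 ≥ … ≥ a_r ≥ 0`. -/
def IsGotzmannDecomp (p : Polynomial ℚ) (r : ℕ) : Prop :=
  ∃ a : Fin r → ℕ, Antitone a ∧
    ∀ t : ℕ, r ≤ t →
      p.eval (t : ℚ) = ∑ i : Fin r, ((t + a i - (i : ℕ)).choose (a i) : ℚ)

/-- An admissible polynomial: one admitting a Gotzmann decomposition. -/
def IsAdmissible (p : Polynomial ℚ) : Prop := ∃ r : ℕ, IsGotzmannDecomp p r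

/-- Setting `x_0 = x_1 = 1` in a term. -/
def trunc01 {n : ℕ} (α : Expo n) : Expo n := fun i => if (i : ℕ) ≤ 1 then 0 else α i

/-- The `x_1`-saturation of a monomial ideal: the ideal generated by the minimal
generators with `x_0 = x_1 = 1`. -/
def xOneSat {n : ℕ} (M : Set (Expo n)) : Set (Expo n) :=
  {x | ∃ α γ : Expo n, IsMinGen M α ∧ x = trunc01 α + γ}

/-- The lexicographic comparison (intended for terms of equal degree):
`α ≺_lex β` iff `α_k < β_k` at the largest index `k` where they differ. -/
def LexLt {n : ℕ} (α β : Expo n) : Prop :=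
  ∃ k : Fin (n + 1), α k < β k ∧ ∀ j : Fin (n + 1), k < j → α j = β j

/-- The reverse lexicographic comparison (intended for terms of equal degree):
`α ≺_revlex β` iff `α_h > β_h` at the smallest index `h` where they differ. -/
def RevLexLt {n : ℕ} (α β : Expo n) : Prop :=
  ∃ h : Fin (n + 1), β h < α h ∧ ∀ j : Fin (n + 1), j < h → α j = β j

/-- A graded term order. -/
def IsGraded {n : ℕ} (ord : TermOrder n) : Prop :=
  ∀ α β : Expo n, deg α < deg β → ord.lt α β

/-- A reverse term order: a graded term order such that, on terms of equal degree,
a strictly larger exponent of `x_0` makes a term strictly smaller. -/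
def IsReverseOrder {n : ℕ} (ord : TermOrder n) : Prop :=
  IsGraded ord ∧ ∀ α β : Expo n, deg α = deg β → β 0 < α 0 → ord.lt α β


namespace Aux

/-- weight of an exponent vector -/
def W (w0 w1 w2 : ℕ) (α : Expo 2) : ℕ := w0 * α 0 + w1 * α 1 + w2 * α 2

lemma W_add (w0 w1 w2 : ℕ) (a b : Expo 2) :
    W w0 w1 w2 (a + b) = W w0 w1 w2 a + W w0 w1 w2 b := by
  simp [W, Pi.add_apply]; ring

def wlt (w0 w1 w2 : ℕ) (α β : Expo 2) : Prop :=
  W w0 w1 w2 α < W w0 w1 w2 β ∨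
    (W w0 w1 w2 α = W w0 w1 w2 β ∧ (α 2 < β 2 ∨ (α 2 = β 2 ∧ α 1 < β 1)))

def wOrd (w0 w1 w2 : ℕ) (h0 : 0 < w0) (h01 : w0 < w1) (h12 : w1 < w2) :
    TermOrder 2 where
  lt := wlt w0 w1 w2
  irrefl a := by simp [wlt]
  trans a b c hab hbc := by
    rcases hab with h | ⟨h, h'⟩ <;> rcases hbc with g | ⟨g, g'⟩ <;>
      simp only [wlt] <;> try (left; omega)
    right
    refine ⟨by omega, ?_⟩
    omega
  total a b hne := by
    by_cases h2 : a 2 = b 2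
    · by_cases h1 : a 1 = b 1
      · have h0' : a 0 ≠ b 0 := by
          intro h0''
          apply hne
          funext i
          fin_cases i <;> assumption
        have : W w0 w1 w2 a ≠ W w0 w1 w2 b := by
          simp only [W, h1, h2]
          intro h
          have : w0 * a 0 = w0 * b 0 := by omega
          exact h0' (Nat.eq_of_mul_eq_mul_left h0 this)
        rcases Nat.lt_or_ge (W w0 w1 w2 a) (W w0 w1 w2 b) with h | h
        · exact Or.inl (Or.inl h)
        · exact Or.inr (Or.inl (by omega))
      · rcases Nat.lt_or_ge (W w0 w1 w2 a) (W w0 w1 w2 b) with h | h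
        · exact Or.inl (Or.inl h)
        rcases Nat.lt_or_ge (W w0 w1 w2 b) (W w0 w1 w2 a) with h' | h'
        · exact Or.inr (Or.inl h')
        have hw : W w0 w1 w2 a = W w0 w1 w2 b := by omega
        rcases Nat.lt_or_ge (a 1) (b 1) with h1' | h1'
        · exact Or.inl (Or.inr ⟨hw, Or.inr ⟨h2, h1'⟩⟩)
        · exact Or.inr (Or.inr ⟨hw.symm, Or.inr ⟨h2.symm, by omega⟩⟩)
    · rcases Nat.lt_or_ge (W w0 w1 w2 a) (W w0 w1 w2 b) with h | h
      · exact Or.inl (Or.inl h)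
      rcases Nat.lt_or_ge (W w0 w1 w2 b) (W w0 w1 w2 a) with h' | h'
      · exact Or.inr (Or.inl h')
      have hw : W w0 w1 w2 a = W w0 w1 w2 b := by omega
      rcases Nat.lt_or_ge (a 2) (b 2) with h2' | h2'
      · exact Or.inl (Or.inr ⟨hw, Or.inl h2'⟩)
      · exact Or.inr (Or.inr ⟨hw.symm, Or.inl (by omega)⟩)
  add_right a b c h := by
    rcases h with h | ⟨h, h'⟩
    · exact Or.inl (by rw [W_add, W_add]; omega)
    · refine Or.inr ⟨by rw [W_add, W_add]; omega, ?_⟩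
      simp only [Pi.add_apply]
      omega
  zero_lt a ha := by
    have : W w0 w1 w2 (0 : Expo 2) = 0 := by simp [W]
    rcases Nat.eq_zero_or_pos (W w0 w1 w2 a) with h | h
    · exfalso
      apply ha
      simp only [W] at h
      have h0' : a 0 = 0 := by
        rcases Nat.mul_eq_zero.mp (by omega : w0 * a 0 = 0) with h | h
        · omega
        · exact h
      have h1' : a 1 = 0 := by
        rcases Nat.mul_eq_zero.mp (by omega : w1 * a 1 = 0) with h | h
        · omega
        · exact h
      have h2' : a 2 = 0 := by
        rcases Nat.mul_eq_zero.mp (by omega : w2 * a 2 = 0) with h | h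
        · omega
        · exact h
      funext i
      fin_cases i <;> assumption
    · exact Or.inl (by omega)
  var_lt i j hij := by
    fin_cases i <;> fin_cases j <;> simp_all <;>
      simp [wlt, W, sing, Pi.single_apply] <;> omega

end Aux

namespace Aux

def mk3 (x y z : ℕ) : Expo 2 := ![x, y, z]

@[simp] lemma mk3_0 (x y z : ℕ) : mk3 x y z 0 = x := rfl
@[simp] lemma mk3_1 (x y z : ℕ) : mk3 x y z 1 = y := rfl
@[simp] lemma mk3_2 (x y z : ℕ) : mk3 x y z 2 = z := rfl

lemma eq_mk3 (α : Expo 2) : α = mk3 (α 0) (α 1) (α 2) := by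
  funext i; fin_cases i <;> rfl

lemma mk3_add (x y z x' y' z' : ℕ) :
    mk3 x y z + mk3 x' y' z' = mk3 (x + x') (y + y') (z + z') := by
  funext i; fin_cases i <;> rfl

lemma sing0 : (sing 0 : Expo 2) = mk3 1 0 0 := by
  funext i; fin_cases i <;> simp [sing, Pi.single_apply, mk3]
lemma sing1 : (sing 1 : Expo 2) = mk3 0 1 0 := by
  funext i; fin_cases i <;> simp [sing, Pi.single_apply, mk3]
lemma sing2 : (sing 2 : Expo 2) = mk3 0 0 1 := by
  funext i; fin_cases i <;> simp [sing, Pi.single_apply, mk3]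

lemma deg_mk3 (x y z : ℕ) : deg (mk3 x y z) = x + y + z := by
  simp [deg, Fin.sum_univ_three, mk3]

lemma deg_eq (α : Expo 2) : deg α = α 0 + α 1 + α 2 := by
  simp [deg, Fin.sum_univ_three]

section IdealFacts

variable {I : Set (Expo 2)}

lemma move01 (hB : IsBorelSet I) (γ : Expo 2) (h : γ + sing 0 ∈ I) :
    γ + sing 1 ∈ I := by
  refine hB _ _ h ⟨1, 0, by decide, by abel⟩

lemma move12 (hB : IsBorelSet I) (γ : Expo 2) (h : γ + sing 1 ∈ I) :
    γ + sing 2 ∈ I := by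
  refine hB _ _ h ⟨2, 1, by decide, by abel⟩

lemma move01k (hB : IsBorelSet I) (k : ℕ) :
    ∀ α : Expo 2, α + k • sing 0 ∈ I → α + k • sing 1 ∈ I := by
  induction k with
  | zero => intro α h; simpa using h
  | succ k ih =>
    intro α h
    have h1 : (α + k • sing 0) + sing 0 ∈ I := by
      have e : α + (k+1) • sing 0 = (α + k • sing 0) + sing 0 := by
        rw [succ_nsmul]; abel
      rwa [e] at h
    have h2 := move01 hB _ h1
    have h3 : (α + sing 1) + k • sing 0 ∈ I := by
      have e : (α + k • sing 0) + sing 1 = (α + sing 1) + k • sing 0 := by abel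
      rwa [e] at h2
    have h4 := ih _ h3
    have e : (α + sing 1) + k • sing 1 = α + (k+1) • sing 1 := by
      rw [succ_nsmul]; abel
    rwa [e] at h4

lemma move12k (hB : IsBorelSet I) (k : ℕ) :
    ∀ α : Expo 2, α + k • sing 1 ∈ I → α + k • sing 2 ∈ I := by
  induction k with
  | zero => intro α h; simpa using h
  | succ k ih =>
    intro α h
    have h1 : (α + k • sing 1) + sing 1 ∈ I := by
      have e : α + (k+1) • sing 1 = (α + k • sing 1) + sing 1 := by
        rw [succ_nsmul]; abel
      rwa [e] at h
    have h2 := move12 hB _ h1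
    have h3 : (α + sing 2) + k • sing 1 ∈ I := by
      have e : (α + k • sing 1) + sing 2 = (α + sing 2) + k • sing 1 := by abel
      rwa [e] at h2
    have h4 := ih _ h3
    have e : (α + sing 2) + k • sing 2 = α + (k+1) • sing 2 := by
      rw [succ_nsmul]; abel
    rwa [e] at h4

/-- saturation: dividing out `x_0` powers stays in `I`. -/
lemma satx0 (hB : IsBorelSet I) (hsat : IsSaturatedIdeal I) (α : Expo 2) (k : ℕ)
    (h : α + k • sing 0 ∈ I) : α ∈ I := by
  apply hsat
  intro i
  fin_cases i
  · exact ⟨k, h⟩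
  · exact ⟨k, move01k hB k α h⟩
  · exact ⟨k, move12k hB k α (move01k hB k α h)⟩

lemma mem_iff (hB : IsBorelSet I) (hsat : IsSaturatedIdeal I) (hM : IsMonIdeal I)
    (α : Expo 2) : α ∈ I ↔ mk3 0 (α 1) (α 2) ∈ I := by
  constructor
  · intro h
    apply satx0 hB hsat _ (α 0)
    have e : mk3 0 (α 1) (α 2) + (α 0) • sing 0 = α := by
      rw [sing0]
      funext i; fin_cases i <;> simp [mk3, Pi.add_apply, Matrix.smul_cons]
    rw [e]; exact h
  · intro h
    have := hM _ h (mk3 (α 0) 0 0)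
    rw [mk3_add] at this
    simp only [Nat.zero_add, Nat.add_zero] at this
    exact (eq_mk3 α ▸ this)

end IdealFacts

end Aux

namespace Aux

lemma deg_add {n : ℕ} (a b : Expo n) : deg (a + b) = deg a + deg b := by
  simp [deg, Pi.add_apply, Finset.sum_add_distrib]

lemma deg_sing (i : Fin 3) : deg (sing i : Expo 2) = 1 := by
  fin_cases i <;> simp [sing, deg, Fin.sum_univ_three, Pi.single_apply]

lemma finite_deg (t : ℕ) : {α : Expo 2 | deg α = t}.Finite := by
  apply Set.Finite.subset (Set.finite_Icc (0 : Expo 2) (fun _ => t))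
  intro α hα
  simp only [Set.mem_setOf_eq] at hα
  constructor
  · intro i; simp
  · intro i
    have : α i ≤ ∑ j, α j := Finset.single_le_sum (fun j _ => Nat.zero_le (α j))
      (Finset.mem_univ i)
    exact le_of_le_of_eq this (by simpa [deg] using hα)

lemma finite_coIdeal (I : Set (Expo 2)) (t : ℕ) : (coIdeal I t).Finite :=
  (finite_deg t).subset (fun α hα => hα.1)

section Count

variable {I : Set (Expo 2)} {d N : ℕ}

lemma P_borel (hB : IsBorelSet I) (a b : ℕ) (h : mk3 0 (a+1) b ∈ I) :
    mk3 0 a (b+1) ∈ I := by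
  have e1 : mk3 0 (a+1) b = mk3 0 a b + sing 1 := by
    rw [sing1, mk3_add]; norm_num
  have e2 : mk3 0 a (b+1) = mk3 0 a b + sing 2 := by
    rw [sing2, mk3_add]; norm_num
  rw [e2]; exact move12 hB _ (e1 ▸ h)

lemma P_mono (hM : IsMonIdeal I) (a b x y : ℕ) (h : mk3 0 a b ∈ I) :
    mk3 0 (a+x) (b+y) ∈ I := by
  have := hM _ h (mk3 0 x y)
  rwa [mk3_add] at this

lemma colbound (hB : IsBorelSet I) (hsat : IsSaturatedIdeal I)
    (hcount : ∀ t : ℕ, N ≤ t → (coIdeal I t).ncard = d)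
    (a b : ℕ) (hab : N < a + b) : mk3 0 a b ∈ I := by
  by_contra hmem
  set s := a + b with hs
  have h1 : insert (mk3 0 a b) ((fun α => α + sing 0) '' coIdeal I (s-1))
      ⊆ coIdeal I s := by
    intro x hx
    rcases hx with rfl | ⟨α, hα, rfl⟩
    · exact ⟨by rw [deg_mk3]; omega, hmem⟩
    · refine ⟨?_, ?_⟩
      · rw [deg_add, deg_sing, hα.1]; omega
      · intro hIn
        exact hα.2 (satx0 hB hsat α 1 (by simpa using hIn))
  have hinj : Function.Injective (fun α : Expo 2 => α + sing 0) :=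
    fun x y hxy => by simpa using congrArg (fun z => z - sing 0) hxy
  have hnot : mk3 0 a b ∉ (fun α => α + sing 0) '' coIdeal I (s-1) := by
    rintro ⟨α, _, hα⟩
    have := congrFun hα 0
    simp [Pi.add_apply, sing0, mk3] at this
  have hfin : ((fun α : Expo 2 => α + sing 0) '' coIdeal I (s-1)).Finite :=
    (finite_coIdeal I (s-1)).image _
  have hcard1 : ((fun α : Expo 2 => α + sing 0) '' coIdeal I (s-1)).ncard
      = d := by
    rw [Set.ncard_image_of_injective _ hinj, hcount (s-1) (by omega)]
  have hcard2 : (insert (mk3 0 a b) ((fun α : Expo 2 => α + sing 0) ''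
      coIdeal I (s-1))).ncard = d + 1 := by
    rw [Set.ncard_insert_of_notMem hnot hfin, hcard1]
  have := Set.ncard_le_ncard h1 (finite_coIdeal I s)
  rw [hcard2, hcount s (by omega)] at this
  omega

lemma sumbound (hB : IsBorelSet I) (hsat : IsSaturatedIdeal I) (hM : IsMonIdeal I)
    (hcount : ∀ t : ℕ, N ≤ t → (coIdeal I t).ncard = d) (c : ℕ → ℕ)
    (hc : ∀ a b : ℕ, mk3 0 a b ∈ I ↔ c b ≤ a)
    (hmono : ∀ b, c (b+1) ≤ c b) :
    c 0 + c 1 + c 2 + c 3 ≤ d := by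
  classical
  set t := N + c 0 + 4 with ht
  set F : Finset (ℕ × ℕ) :=
    (Finset.range 4).biUnion (fun b => (Finset.range (c b)).image (fun a => (a, b)))
    with hF
  have hcardF : F.card = c 0 + c 1 + c 2 + c 3 := by
    rw [hF, Finset.card_biUnion]
    · have : ∀ b, ((Finset.range (c b)).image (fun a => (a, b))).card = c b := by
        intro b
        rw [Finset.card_image_of_injective _ (fun x y h => (Prod.mk.injEq _ _ _ _ ▸ h).1)]
        exact Finset.card_range _
      simp only [this]
      simp [Finset.sum_range_succ]
      try omega
    · intro x _ y _ hxy
      simp only [Finset.disjoint_left]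
      intro p hp hq
      simp only [Finset.mem_image, Finset.mem_range] at hp hq
      obtain ⟨a, _, rfl⟩ := hp
      obtain ⟨a', _, h⟩ := hq
      exact hxy ((Prod.mk.injEq _ _ _ _ ▸ h).2.symm ▸ rfl)
  have hcb : ∀ b : ℕ, b ≤ 3 → c b ≤ c 0 := by
    intro b hb
    interval_cases b
    · rfl
    · exact hmono 0
    · exact le_trans (hmono 1) (hmono 0)
    · exact le_trans (hmono 2) (le_trans (hmono 1) (hmono 0))
  have hsub : (fun p : ℕ × ℕ => mk3 (t - p.1 - p.2) p.1 p.2) '' ↑F ⊆ coIdeal I t := by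
    rintro x ⟨⟨a, b⟩, hp, rfl⟩
    simp only [Finset.coe_biUnion, Finset.mem_coe, Finset.mem_range, Set.mem_iUnion,
      Finset.mem_image, hF] at hp
    obtain ⟨b', hb', ⟨a', ha', h⟩⟩ := hp
    obtain ⟨rfl, rfl⟩ : a = a' ∧ b = b' := by
      have := Prod.mk.injEq  a' b' a b ▸ h
      exact ⟨(Prod.mk.inj h).1.symm, (Prod.mk.inj h).2.symm⟩
    have hab : a + b ≤ c 0 + 3 := by
      have := hcb b (by omega)
      omega
    refine ⟨by rw [deg_mk3]; omega, ?_⟩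
    intro hIn
    rw [mem_iff hB hsat hM] at hIn
    simp only [mk3_1, mk3_2] at hIn
    rw [hc] at hIn
    omega
  have hinj : Set.InjOn (fun p : ℕ × ℕ => mk3 (t - p.1 - p.2) p.1 p.2) ↑F := by
    intro p _ q _ h
    have h1 := congrFun h 1
    have h2 := congrFun h 2
    simp only [mk3_1, mk3_2] at h1 h2
    exact Prod.ext h1 h2
  have := Set.ncard_le_ncard hsub (finite_coIdeal I t)
  rw [Set.ncard_image_of_injOn hinj, Set.ncard_coe_finset, hcardF,
    hcount t (by omega)] at this
  exact this

end Count

end Aux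

namespace Aux

lemma W_eval (u v : ℕ) (α : Expo 2) :
    W 1 (1+u) (1+v) α = deg α + u * α 1 + v * α 2 := by
  simp [W, deg_eq]; ring

lemma czero {c : ℕ → ℕ} (hmono : ∀ b, c (b+1) ≤ c b) (k : ℕ) (hk : c k = 0) :
    ∀ b, k ≤ b → c b = 0 := by
  intro b
  induction b with
  | zero => intro h; exact le_antisymm (Nat.le_zero.mp h ▸ hk.le) (Nat.zero_le _)
  | succ b ih =>
    intro h
    rcases Nat.lt_or_ge k (b+1) with h' | h'
    · exact Nat.le_zero.mp ((hmono b).trans (ih (by omega)).le)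
    · have : k = b + 1 := by omega
      exact this ▸ hk

end Aux

open Aux in
theorem small_degree_hilb_segment' (d : ℕ) (hd1 : 1 ≤ d) (hd6 : d ≤ 6)
    (I : Set (Expo 2)) (hI : IsBorelIdeal I) (hsat : IsSaturatedIdeal I)
    (hp : HasHilbPoly I (Polynomial.C (d : ℚ))) :
    ∃ ord : TermOrder 2, IsSegmentAt ord.lt I d := by
  classical
  obtain ⟨hM, hB⟩ := hI
  obtain ⟨N, hpN⟩ := hp
  have hcount : ∀ t : ℕ, N ≤ t → (coIdeal I t).ncard = d := by
    intro t ht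
    have := hpN t ht
    rw [Polynomial.eval_C] at this
    exact_mod_cast this
  have hex : ∀ b : ℕ, ∃ a : ℕ, mk3 0 a b ∈ I :=
    fun b => ⟨N + 1, colbound hB hsat hcount _ _ (by omega)⟩
  set c : ℕ → ℕ := fun b => Nat.find (hex b) with hcdef
  have hc : ∀ a b : ℕ, mk3 0 a b ∈ I ↔ c b ≤ a := by
    intro a b
    constructor
    · intro h
      exact Nat.find_min' (hex b) h
    · intro h
      have hspec := Nat.find_spec (hex b)
      have := P_mono hM (c b) b (a - c b) 0 hspec
      rwa [show c b + (a - c b) = a by omega, Nat.add_zero] at this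
  have hdec : ∀ b, 0 < c (b+1) → c (b+1) < c b := by
    intro b h
    have h1 : mk3 0 (c (b+1) - 1) (b+1) ∉ I := by
      rw [hc]; omega
    have h2 : mk3 0 (c (b+1)) b ∉ I := by
      intro hmem
      apply h1
      have := P_borel hB (c (b+1) - 1) b
        (by rwa [show c (b+1) - 1 + 1 = c (b+1) by omega])
      exact this
    rw [hc] at h2
    omega
  have hmono : ∀ b, c (b+1) ≤ c b := by
    intro b
    rcases Nat.eq_zero_or_pos (c (b+1)) with h | h
    · omega
    · exact (hdec b h).le
  have hsum : c 0 + c 1 + c 2 + c 3 ≤ d :=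
    sumbound hB hsat hM hcount c hc hmono
  have memiff : ∀ α : Expo 2, α ∈ I ↔ c (α 2) ≤ α 1 :=
    fun α => (mem_iff hB hsat hM α).trans (hc _ _)
  by_cases h0 : c 0 = 0
  · -- trivial case : everything is in I
    refine ⟨wOrd 1 2 3 (by norm_num) (by norm_num) (by norm_num), ?_⟩
    intro τ σ _ _ _ _
    rw [memiff]
    rw [czero hmono 0 h0 (σ 2) (Nat.zero_le _)]
    exact Nat.zero_le _
  · by_cases h1 : c 1 = 0
    · -- one column : u = 1, v = c 0 + 1
      refine ⟨wOrd 1 (1+1) (1+(c 0 + 1)) (by norm_num) (by norm_num) (by omega), ?_⟩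
      intro τ σ hτ hdτ hdσ hlt
      by_contra hσ
      rw [memiff] at hτ hσ
      push_neg at hσ
      have hσ2 : σ 2 = 0 := by
        by_contra h'
        rw [czero hmono 1 h1 (σ 2) (by omega)] at hσ
        omega
      rw [hσ2] at hσ
      have key : 1 * σ 1 + (c 0 + 1) * σ 2 < 1 * τ 1 + (c 0 + 1) * τ 2 := by
        rw [hσ2]
        simp only [Nat.mul_zero, Nat.add_zero, Nat.one_mul]
        rcases Nat.eq_zero_or_pos (τ 2) with h' | h'
        · rw [h'] at hτ
          rw [h']
          simp only [Nat.mul_zero, Nat.add_zero]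
          omega
        · have hv : (c 0 + 1) * 1 ≤ (c 0 + 1) * τ 2 := Nat.mul_le_mul_left _ h'
          rw [Nat.mul_one] at hv
          linarith
      have hW : W 1 (1+1) (1+(c 0+1)) σ < W 1 (1+1) (1+(c 0+1)) τ := by
        rw [W_eval, W_eval, hdσ, hdτ]
        linarith
      rcases hlt with h' | ⟨h', _⟩ <;> linarith
    · by_cases h2 : c 2 = 0
      · -- two columns : u = 2, v = 2*(c 0 - c 1)+1
        have hc1pos : 0 < c 1 := Nat.pos_of_ne_zero h1
        have hd01 : c 1 < c 0 := hdec 0 hc1pos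
        obtain ⟨g, hg⟩ : ∃ g, c 0 = c 1 + g + 1 := ⟨c 0 - c 1 - 1, by omega⟩
        have hsum2 : c 0 + c 1 ≤ 6 := by omega
        refine ⟨wOrd 1 (1+2) (1+(2*g+3)) (by norm_num) (by norm_num) (by omega), ?_⟩
        intro τ σ hτ hdτ hdσ hlt
        by_contra hσ
        rw [memiff] at hτ hσ
        push_neg at hσ
        have hσ2 : σ 2 ≤ 1 := by
          by_contra h'
          rw [czero hmono 2 h2 (σ 2) (by omega)] at hσ
          omega
        have hc1le2 : c 1 ≤ 2 := by omega
        have key : 2 * σ 1 + (2*g+3) * σ 2 < 2 * τ 1 + (2*g+3) * τ 2 := by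
          have hL : 2 * σ 1 + (2*g+3) * σ 2 + 1 ≤ 2 * c 1 + 2 * g + 2 := by
            have hcase : σ 2 = 0 ∨ σ 2 = 1 := by omega
            rcases hcase with h' | h' <;> rw [h'] at hσ ⊢
            · rw [hg] at hσ; omega
            · omega
          rcases Nat.lt_or_ge (τ 2) 2 with h' | h'
          · have hcase : τ 2 = 0 ∨ τ 2 = 1 := by omega
            rcases hcase with h'' | h'' <;> rw [h''] at hτ ⊢
            · rw [hg] at hτ; omega
            · omega
          · have hv : (2*g+3) * 2 ≤ (2*g+3) * τ 2 := Nat.mul_le_mul_left _ h'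
            linarith
        have hW : W 1 (1+2) (1+(2*g+3)) σ < W 1 (1+2) (1+(2*g+3)) τ := by
          rw [W_eval, W_eval, hdσ, hdτ]
          linarith
        rcases hlt with h' | ⟨h', _⟩ <;> linarith
      · -- three columns : necessarily c = (3,2,1), u = 4, v = 5
        have hc2pos : 0 < c 2 := Nat.pos_of_ne_zero h2
        have hd12 : c 2 < c 1 := hdec 1 hc2pos
        have hd01 : c 1 < c 0 := hdec 0 (Nat.lt_of_le_of_lt (Nat.zero_le _) hd12)
        have hc0 : c 0 = 3 := by omega
        have hc1 : c 1 = 2 := by omega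
        have hc2 : c 2 = 1 := by omega
        have hc3 : c 3 = 0 := by omega
        refine ⟨wOrd 1 (1+4) (1+5) (by norm_num) (by norm_num) (by norm_num), ?_⟩
        intro τ σ hτ hdτ hdσ hlt
        by_contra hσ
        rw [memiff] at hτ hσ
        push_neg at hσ
        have hσ2 : σ 2 ≤ 2 := by
          by_contra h'
          rw [czero hmono 3 hc3 (σ 2) (by omega)] at hσ
          omega
        have key : 4 * σ 1 + 5 * σ 2 < 4 * τ 1 + 5 * τ 2 := by
          have hL : 4 * σ 1 + 5 * σ 2 ≤ 10 := by
            have hcase : σ 2 = 0 ∨ σ 2 = 1 ∨ σ 2 = 2 := by omega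
            rcases hcase with h' | h' | h' <;> rw [h'] at hσ ⊢
            · rw [hc0] at hσ; omega
            · rw [hc1] at hσ; omega
            · rw [hc2] at hσ; omega
          rcases Nat.lt_or_ge (τ 2) 3 with h' | h'
          · have hcase : τ 2 = 0 ∨ τ 2 = 1 ∨ τ 2 = 2 := by omega
            rcases hcase with h'' | h'' | h'' <;> rw [h''] at hτ ⊢
            · rw [hc0] at hτ; omega
            · rw [hc1] at hτ; omega
            · rw [hc2] at hτ; omega
          · omega
        have hW : W 1 (1+4) (1+5) σ < W 1 (1+4) (1+5) τ := by
          rw [W_eval, W_eval, hdσ, hdτ]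
          linarith
        rcases hlt with h' | ⟨h', _⟩ <;> linarith

/-- In `K[x_0,x_1,x_2]`, every saturated Borel ideal with constant Hilbert
polynomial `d ≤ 6` is a hilb-segment ideal with respect to some term order (the Gotzmann
number of the constant polynomial `d` being `d`). -/
theorem small_degree_hilb_segment (d : ℕ) (hd1 : 1 ≤ d) (hd6 : d ≤ 6)
    (I : Set (Expo 2)) (hI : IsBorelIdeal I) (hsat : IsSaturatedIdeal I)
    (hp : HasHilbPoly I (Polynomial.C (d : ℚ))) :
    ∃ ord : TermOrder 2, IsSegmentAt ord.lt I d :=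
  small_degree_hilb_segment' d hd1 hd6 I hI hsat hp
end

section
/- For every integer d ≥ 7 there exists a saturated Borel ideal I ⊆ K[x_0,x_1,x_2] whose Hilbert polynomial is the constant polynomial d and which is not a hilb-segment ideal for any term order; that is, for no term order ≺ is I ∩ 𝕋_d a segment with respect to ≺ (here d is the Gotzmann number of the constant polynomial d). -/
open Polynomial

-- ==== auxiliary development ====

def idealC (c : ℕ → ℕ) : Set (Expo 2) := {α | c (α 2) ≤ α 1}

section C
variable (c : ℕ → ℕ)

lemma c_succ_le (hstep : ∀ k, c (k+1) = 0 ∨ c (k+1) < c k) (k : ℕ) : c (k+1) ≤ c k := by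
  rcases hstep k with h | h <;> omega

lemma c_anti (hstep : ∀ k, c (k+1) = 0 ∨ c (k+1) < c k) {a b : ℕ} (hab : a ≤ b) :
    c b ≤ c a := by
  induction hab with
  | refl => exact le_rfl
  | step h ih => exact le_trans (c_succ_le c hstep _) ih

lemma monC (hstep : ∀ k, c (k+1) = 0 ∨ c (k+1) < c k) : IsMonIdeal (idealC c) := by
  intro α hα γ
  have h := c_anti c hstep (show α 2 ≤ α 2 + γ 2 by omega)
  have hα' : c (α 2) ≤ α 1 := hα
  show c ((α + γ) 2) ≤ (α + γ) 1
  simp only [Pi.add_apply]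
  omega

lemma borelC (hstep : ∀ k, c (k+1) = 0 ∨ c (k+1) < c k) : IsBorelSet (idealC c) := by
  intro α β hα hmv
  obtain ⟨j, k, hjk, heq⟩ := hmv
  have hα' : c (α 2) ≤ α 1 := hα
  have h1 := congrFun heq 1
  have h2 := congrFun heq 2
  simp only [Pi.add_apply, sing] at h1 h2
  show c (β 2) ≤ β 1
  fin_cases j <;> fin_cases k <;> simp_all [Pi.single_apply] <;>
    first
      | omega
      | (rw [← h2]; rcases hstep (α 2) with h | h <;> omega)

end C

section C2
variable (c : ℕ → ℕ)

lemma satC : IsSaturatedIdeal (idealC c) := by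
  intro α h
  obtain ⟨k, hk⟩ := h 0
  have hk' : c ((α + k • sing (0 : Fin 3)) 2) ≤ (α + k • sing (0 : Fin 3)) 1 := hk
  have h1 : (α + k • sing (0 : Fin 3)) 1 = α 1 := by
    simp [sing, Pi.single_apply]
  have h2 : (α + k • sing (0 : Fin 3)) 2 = α 2 := by
    simp [sing, Pi.single_apply]
  show c (α 2) ≤ α 1
  rw [← h1, ← h2]; exact hk'

def mk3 (t a b : ℕ) : Expo 2 := ![t - a - b, a, b]

def FF (t : ℕ) : Finset (Expo 2) :=
  (Finset.range 3).biUnion fun b => (Finset.range (c b)).image fun a => mk3 t a b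

lemma FF_card (t : ℕ) : (FF c t).card = c 0 + c 1 + c 2 := by
  rw [FF, Finset.card_biUnion]
  · have himg : ∀ b, ((Finset.range (c b)).image fun a => mk3 t a b).card = c b := by
      intro b
      rw [Finset.card_image_of_injective _ (fun a a' h => by
        have := congrFun h 1
        simpa [mk3] using this), Finset.card_range]
    rw [Finset.sum_range_succ, Finset.sum_range_succ, Finset.sum_range_one,
      himg, himg, himg]
  · intro x hx y hy hxy
    rw [Function.onFun_apply, Finset.disjoint_left]
    intro a ha hb
    rw [Finset.mem_image] at ha hb
    obtain ⟨u, _, hu⟩ := ha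
    obtain ⟨v, _, hv⟩ := hb
    apply hxy
    have := congrFun (hu.trans hv.symm) 2
    simpa [mk3] using this

lemma co_eq (hstep : ∀ k, c (k+1) = 0 ∨ c (k+1) < c k) (hz : ∀ k, 3 ≤ k → c k = 0)
    (t : ℕ) (ht : c 0 + 3 ≤ t) : coIdeal (idealC c) t = ↑(FF c t) := by
  ext α
  constructor
  · rintro ⟨hdeg, hnot⟩
    have hnot' : α 1 < c (α 2) := by
      by_contra h
      exact hnot (show c (α 2) ≤ α 1 by omega)
    have hb : α 2 < 3 := by
      by_contra h
      have := hz (α 2) (by omega)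
      omega
    have hd : α 0 + α 1 + α 2 = t := by
      rw [← hdeg]
      exact (Fin.sum_univ_three α).symm
    rw [Finset.mem_coe, FF, Finset.mem_biUnion]
    refine ⟨α 2, Finset.mem_range.mpr hb, Finset.mem_image.mpr
      ⟨α 1, Finset.mem_range.mpr hnot', ?_⟩⟩
    funext i
    fin_cases i
    · show t - α 1 - α 2 = α 0
      omega
    · rfl
    · rfl
  · intro hmem
    rw [Finset.mem_coe, FF, Finset.mem_biUnion] at hmem
    obtain ⟨b, hb, hmem⟩ := hmem
    rw [Finset.mem_image] at hmem
    obtain ⟨a, ha, rfl⟩ := hmem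
    rw [Finset.mem_range] at ha hb
    have hcb : c b ≤ c 0 := c_anti c hstep (Nat.zero_le b)
    have hab : a + b ≤ t := by omega
    constructor
    · show deg (mk3 t a b) = t
      calc deg (mk3 t a b) = t - a - b + a + b := Fin.sum_univ_three _
        _ = t := by omega
    · show ¬ c ((mk3 t a b) 2) ≤ (mk3 t a b) 1
      show ¬ c b ≤ a
      omega

lemma hilbC (hstep : ∀ k, c (k+1) = 0 ∨ c (k+1) < c k) (hz : ∀ k, 3 ≤ k → c k = 0)
    (d : ℕ) (hsum : c 0 + c 1 + c 2 = d) :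
    HasHilbPoly (idealC c) (Polynomial.C (d : ℚ)) := by
  refine ⟨c 0 + 3, fun t ht => ?_⟩
  rw [co_eq c hstep hz t ht, Set.ncard_coe_finset, FF_card, hsum, Polynomial.eval_C]

end C2

lemma noseg {d : ℕ} (I : Set (Expo 2)) (σ1 σ2 τ1 τ2 : Expo 2)
    (h1 : σ1 ∉ I) (h2 : σ2 ∉ I) (h3 : τ1 ∈ I) (h4 : τ2 ∈ I)
    (d1 : deg σ1 = d) (d2 : deg σ2 = d) (d3 : deg τ1 = d) (d4 : deg τ2 = d)
    (hadd : σ1 + σ2 = τ1 + τ2) (ord : TermOrder 2) : ¬ IsSegmentAt ord.lt I d := by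
  intro hseg
  have l1 : ord.lt σ1 τ1 := by
    rcases ord.total σ1 τ1 (fun h => h1 (h ▸ h3)) with h | h
    · exact h
    · exact absurd (hseg τ1 σ1 h3 d3 d1 h) h1
  have l2 : ord.lt σ2 τ2 := by
    rcases ord.total σ2 τ2 (fun h => h2 (h ▸ h4)) with h | h
    · exact h
    · exact absurd (hseg τ2 σ2 h4 d4 d2 h) h2
  have a1 : ord.lt (σ1 + σ2) (τ1 + σ2) := ord.add_right _ _ _ l1
  have a2 : ord.lt (τ1 + σ2) (τ1 + τ2) := by
    have := ord.add_right _ _ τ1 l2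
    rwa [add_comm σ2 τ1, add_comm τ2 τ1] at this
  have := ord.trans _ _ _ a1 a2
  rw [← hadd] at this
  exact ord.irrefl _ this


/-- For every `d ≥ 7` there is a saturated Borel ideal of `K[x_0,x_1,x_2]`
with constant Hilbert polynomial `d` which is not a hilb-segment ideal for any term order
(the Gotzmann number of the constant polynomial `d` being `d`). -/
theorem large_degree_not_hilb_segment (d : ℕ) (hd : 7 ≤ d) :
    ∃ I : Set (Expo 2), IsBorelIdeal I ∧ IsSaturatedIdeal I ∧
      HasHilbPoly I (Polynomial.C (d : ℚ)) ∧
      ∀ ord : TermOrder 2, ¬ IsSegmentAt ord.lt I d := by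
  rcases eq_or_lt_of_le hd with h7 | h8
  · -- d = 7
    subst h7
    set c : ℕ → ℕ := fun k => match k with | 0 => 4 | 1 => 3 | _ => 0 with hc
    have hstep : ∀ k, c (k+1) = 0 ∨ c (k+1) < c k := by
      intro k
      rcases k with _ | _ | n
      · right; decide
      · left; rfl
      · left; rfl
    have hz : ∀ k, 3 ≤ k → c k = 0 := by
      intro k hk
      rcases k with _ | _ | n
      · omega
      · omega
      · rfl
    have hsum : c 0 + c 1 + c 2 = 7 := rfl
    refine ⟨idealC c, ⟨monC c hstep, borelC c hstep⟩, satC c,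
      hilbC c hstep hz 7 hsum, fun ord => ?_⟩
    refine noseg (idealC c) ![4,2,1] ![4,2,1] ![3,4,0] ![5,0,2] ?_ ?_ ?_ ?_ ?_ ?_ ?_ ?_ ?_ ord
    · show ¬ ((3:ℕ) ≤ 2); decide
    · show ¬ ((3:ℕ) ≤ 2); decide
    · show (4:ℕ) ≤ 4; decide
    · show (0:ℕ) ≤ 0; decide
    · calc deg ![4,2,1] = 4+2+1 := Fin.sum_univ_three _
        _ = 7 := rfl
    · calc deg ![4,2,1] = 4+2+1 := Fin.sum_univ_three _
        _ = 7 := rfl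
    · calc deg ![3,4,0] = 3+4+0 := Fin.sum_univ_three _
        _ = 7 := rfl
    · calc deg ![5,0,2] = 5+0+2 := Fin.sum_univ_three _
        _ = 7 := rfl
    · funext i
      fin_cases i
      · rfl
      · rfl
      · rfl
  · -- 8 ≤ d
    have h8' : 8 ≤ d := h8
    set c : ℕ → ℕ := fun k => match k with | 0 => d - 3 | 1 => 2 | 2 => 1 | _ => 0 with hc
    have hstep : ∀ k, c (k+1) = 0 ∨ c (k+1) < c k := by
      intro k
      rcases k with _ | _ | _ | n
      · right; show (2:ℕ) < d - 3; omega
      · right; show (1:ℕ) < 2; omega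
      · left; rfl
      · left; rfl
    have hz : ∀ k, 3 ≤ k → c k = 0 := by
      intro k hk
      rcases k with _ | _ | _ | n
      · omega
      · omega
      · omega
      · rfl
    have hsum : c 0 + c 1 + c 2 = d := by
      show d - 3 + 2 + 1 = d; omega
    refine ⟨idealC c, ⟨monC c hstep, borelC c hstep⟩, satC c,
      hilbC c hstep hz d hsum, fun ord => ?_⟩
    refine noseg (idealC c) ![4, d-4, 0] ![d-2, 0, 2] ![d-3, 2, 1] ![5, d-6, 1]
      ?_ ?_ ?_ ?_ ?_ ?_ ?_ ?_ ?_ ord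
    · show ¬ (d - 3 ≤ d - 4); omega
    · show ¬ ((1:ℕ) ≤ 0); decide
    · show (2:ℕ) ≤ 2; decide
    · show (2:ℕ) ≤ d - 6; omega
    · calc deg ![4, d-4, 0] = 4 + (d-4) + 0 := Fin.sum_univ_three _
        _ = d := by omega
    · calc deg ![d-2, 0, 2] = (d-2) + 0 + 2 := Fin.sum_univ_three _
        _ = d := by omega
    · calc deg ![d-3, 2, 1] = (d-3) + 2 + 1 := Fin.sum_univ_three _
        _ = d := by omega
    · calc deg ![5, d-6, 1] = 5 + (d-6) + 1 := Fin.sum_univ_three _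
        _ = d := by omega
    · funext i
      fin_cases i
      · show 4 + (d-2) = (d-3) + 5; omega
      · show (d-4) + 0 = 2 + (d-6); omega
      · rfl
end

section
/- Let p(z) = dz + 1 − g be an admissible polynomial (equivalently, d ≥ 1 and g ≤ (d−1)(d−2)/2). Then there exist integers n ≥ 2 and j > 0 such that binom(j−1+n, n) ≤ p(j−1) and p(j+h) < binom(j+h+n, n) for every integer h ≥ 0 (in fact n = 2 and some j with d ≤ j ≤ r work, where r = binom(d,2)+1−g is the Gotzmann number of p). -/
open Polynomial

private lemma choose_two_cast (n : ℕ) : ((n.choose 2 : ℕ) : ℤ) * 2 = (n : ℤ) * ((n : ℤ) - 1) := by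
  induction n with
  | zero => simp
  | succ m ih =>
    have : (m + 1).choose 2 = m.choose 2 + m.choose 1 := by
      rw [Nat.choose_succ_succ]; ring_nf
    rw [this]
    push_cast
    push_cast at ih
    simp [Nat.choose_one_right] at this ⊢
    linarith

/-- For an admissible polynomial `p(z) = dz + 1 - g` (`d ≥ 1`,
`g ≤ (d-1)(d-2)/2`) with Gotzmann number `r = binom(d,2) + 1 - g`, there exist `n ≥ 2`
and `j > 0` with `binom(j-1+n, n) ≤ p(j-1)` and `p(j+h) < binom(j+h+n, n)` for all
`h ≥ 0`; in fact `n = 2` and some `j` with `d ≤ j ≤ r` work. -/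
theorem exists_j_for_plane (d : ℕ) (hd : 1 ≤ d) (g : ℤ)
    (hg : 2 * g ≤ ((d : ℤ) - 1) * ((d : ℤ) - 2))
    (r : ℤ) (hr : r = (d.choose 2 : ℤ) + 1 - g) :
    ∃ j : ℕ, 0 < j ∧ d ≤ j ∧ (j : ℤ) ≤ r ∧
      (((j + 1).choose 2 : ℤ)) ≤ (d : ℤ) * ((j : ℤ) - 1) + 1 - g ∧
      ∀ h : ℕ, (d : ℤ) * ((j : ℤ) + (h : ℤ)) + 1 - g < ((j + h + 2).choose 2 : ℤ) :=  by
  have hgabs : g ≤ (g.natAbs : ℤ) := Int.le_natAbs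
  set P : ℕ → Prop := fun k => (k : ℤ) * k + 2 * d + 2 * g ≤ (2 * d - 1) * k + 2 with hP
  have hdec : DecidablePred P := fun k => by unfold P; infer_instance
  set B : ℕ := 2 * d + 2 * g.natAbs + 2 with hB
  have key : ∀ k : ℕ, P k → k ≤ B := by
    intro k hk
    by_contra hc
    push_neg at hc
    have hc' : (B : ℤ) < (k : ℤ) := by exact_mod_cast hc
    have hB' : (B : ℤ) = 2 * d + 2 * (g.natAbs : ℤ) + 2 := by push_cast [hB]; ring
    unfold P at hk
    have hk1 : (1 : ℤ) ≤ (k : ℤ) := by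
      have : (2 : ℤ) ≤ (B : ℤ) := by rw [hB']; linarith [Int.natCast_nonneg d, Int.natCast_nonneg g.natAbs]
      linarith
    have hmul : (B : ℤ) * k ≤ (k : ℤ) * k :=
      mul_le_mul_of_nonneg_right hc'.le (Int.natCast_nonneg k)
    have hmul2 : ((g.natAbs : ℤ)) * 1 ≤ (g.natAbs : ℤ) * k :=
      mul_le_mul_of_nonneg_left hk1 (Int.natCast_nonneg _)
    have hmul3 : ((d : ℤ)) * 1 ≤ (d : ℤ) * k :=
      mul_le_mul_of_nonneg_left hk1 (Int.natCast_nonneg _)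
    have hng : -((g.natAbs : ℤ)) ≤ g := by rw [← Int.abs_eq_natAbs]; exact neg_abs_le g
    nlinarith [hk, hc', hng, hmul, hmul2, hmul3, hB']
  have hPd : P d := by
    unfold P
    nlinarith [hg]
  set j : ℕ := Nat.findGreatest P B with hj
  have hdj : d ≤ j := Nat.le_findGreatest (key d hPd) hPd
  have hPj : P j := Nat.findGreatest_spec (key d hPd) hPd
  have hnPj1 : ¬ P (j + 1) := by
    rcases le_or_gt (j + 1) B with hle | hlt
    · exact Nat.findGreatest_is_greatest (Nat.lt_succ_self j) hle
    · intro hp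
      exact absurd (key _ hp) (by omega)
  have hdj' : (d : ℤ) ≤ (j : ℤ) := by exact_mod_cast hdj
  have hd' : (1 : ℤ) ≤ (d : ℤ) := by exact_mod_cast hd
  unfold P at hPj hnPj1
  push_neg at hnPj1
  push_cast at hnPj1
  refine ⟨j, by omega, hdj, ?_, ?_, ?_⟩
  · -- j ≤ r
    have h2 := choose_two_cast d
    rw [hr]
    nlinarith [hPj, mul_nonneg (by linarith : (0:ℤ) ≤ (j:ℤ) - d) (by nlinarith : (0:ℤ) ≤ (j:ℤ) - d - 1 + 1), mul_self_nonneg ((j:ℤ) - d), mul_nonneg (sub_nonneg.2 hdj') (sub_nonneg.2 hdj')]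
  · -- first inequality
    have h2 := choose_two_cast (j + 1)
    push_cast at h2
    linarith [hPj]
  · -- second inequality family
    intro h
    have h2 := choose_two_cast (j + h + 2)
    push_cast at h2
    have hh : (0 : ℤ) ≤ (h : ℤ) := Int.natCast_nonneg h
    nlinarith [hnPj1, mul_nonneg hh (by linarith : (0:ℤ) ≤ 2 * (j:ℤ) + (h:ℤ) + 3 - 2 * d)]
end

section
/- Let p(z) = dz + 1 − g be an admissible polynomial (equivalently, d ≥ 1 and g ≤ (d−1)(d−2)/2). Then for every n ≥ 2 there exists a saturated Borel ideal I ⊆ K[x_0,…,x_n] which is a gen-segment ideal with respect to the revlex order and whose Hilbert polynomial is p(z). -/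
open Polynomial

lemma sing_apply {n : ℕ} (i j : Fin (n + 1)) : sing i j = if j = i then 1 else 0 :=
  Pi.single_apply i 1 j

lemma deg_add {n : ℕ} (α β : Expo n) : deg (α + β) = deg α + deg β := by
  simp [deg, Finset.sum_add_distrib]

lemma deg_sing {n : ℕ} (i : Fin (n + 1)) : deg (sing i) = 1 := by
  simp [deg, sing_apply]

lemma single_le_deg {n : ℕ} (α : Expo n) (i : Fin (n + 1)) : α i ≤ deg α :=
  Finset.single_le_sum (fun _ _ => Nat.zero_le _) (Finset.mem_univ i)

lemma pair_le_deg {n : ℕ} (α : Expo n) {i j : Fin (n + 1)} (h : i ≠ j) :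
    α i + α j ≤ deg α := by
  have h1 : ∑ k ∈ ({i, j} : Finset (Fin (n+1))), α k = α i + α j :=
    Finset.sum_pair h
  rw [← h1, deg]
  exact Finset.sum_le_sum_of_subset (Finset.subset_univ _)

lemma deg3 {n : ℕ} (hn : 2 ≤ n) (α : Expo n)
    (h : ∀ i : Fin (n + 1), 3 ≤ (i : ℕ) → α i = 0) :
    deg α = α ⟨0, by omega⟩ + α ⟨1, by omega⟩ + α ⟨2, by omega⟩ := by
  have hsub : deg α = ∑ i ∈ ({⟨0, by omega⟩, ⟨1, by omega⟩, ⟨2, by omega⟩} : Finset (Fin (n+1))), α i := by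
    rw [deg]
    symm
    apply Finset.sum_subset (Finset.subset_univ _)
    intro x _ hx
    apply h
    simp only [Finset.mem_insert, Finset.mem_singleton] at hx
    push_neg at hx
    obtain ⟨h0, h1, h2⟩ := hx
    have v0 : (x : ℕ) ≠ 0 := fun hv => h0 (Fin.ext hv)
    have v1 : (x : ℕ) ≠ 1 := fun hv => h1 (Fin.ext hv)
    have v2 : (x : ℕ) ≠ 2 := fun hv => h2 (Fin.ext hv)
    omega
  rw [hsub]
  rw [Finset.sum_insert (by simp [Fin.ext_iff]), Finset.sum_insert (by simp [Fin.ext_iff]),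
    Finset.sum_singleton, add_assoc]

lemma deg_one {n : ℕ} (σ : Expo n) (h : deg σ = 1) :
    ∃ l, σ l = 1 ∧ ∀ m, m ≠ l → σ m = 0 := by
  have hex : ∃ l, 1 ≤ σ l := by
    by_contra hc
    push_neg at hc
    have : deg σ = 0 := Finset.sum_eq_zero (fun i _ => by have := hc i; omega)
    omega
  obtain ⟨l, hl⟩ := hex
  have hle := single_le_deg σ l
  refine ⟨l, by omega, fun m hm => ?_⟩
  have := pair_le_deg σ hm
  omega

set_option maxHeartbeats 1600000 in
/-- Let `p(z) = dz + 1 - g` be admissible (`d ≥ 1`, `g ≤ (d-1)(d-2)/2`).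
For every `n ≥ 2` there exists a saturated Borel ideal of `K[x_0,…,x_n]` which is a
gen-segment ideal w.r.t. the revlex order and has Hilbert polynomial `p`. -/
theorem exists_gen_segment_revlex (d : ℕ) (hd : 1 ≤ d) (g : ℤ)
    (hg : 2 * g ≤ ((d : ℤ) - 1) * ((d : ℤ) - 2))
    (n : ℕ) (hn : 2 ≤ n)
    (p : Polynomial ℚ)
    (hp : p = Polynomial.C (d : ℚ) * Polynomial.X + Polynomial.C (1 - (g : ℚ))) :
    ∃ I : Set (Expo n), IsBorelIdeal I ∧ IsSaturatedIdeal I ∧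
      IsGenSegment RevLexLt I ∧ HasHilbPoly I p := by
  -- the "genus defect" B
  obtain ⟨e, he0, hEe⟩ : ∃ e : ℤ, 0 ≤ e ∧ ((d:ℤ)-1)*((d:ℤ)-2) - 2*g = 2*e := by
    have hev : Even (((d:ℤ)-1)*((d:ℤ)-2) - 2*g) := by
      have h1 : Even (((d:ℤ)-2)*(((d:ℤ)-2)+1)) := Int.even_mul_succ_self _
      have h2 : Even ((2:ℤ)*g) := ⟨g, by ring⟩
      have h3 : ((d:ℤ)-1)*((d:ℤ)-2) = ((d:ℤ)-2)*(((d:ℤ)-2)+1) := by ring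
      rw [h3]
      exact h1.sub h2
    obtain ⟨e, he⟩ := hev
    exact ⟨e, by omega, by omega⟩
  set B : ℕ := e.toNat with hBdef
  have hB2 : 2 * (B : ℤ) = ((d:ℤ)-1)*((d:ℤ)-2) - 2*g := by
    rw [hBdef, Int.toNat_of_nonneg he0]; omega
  set i0 : Fin (n+1) := ⟨0, by omega⟩ with hi0
  set i1 : Fin (n+1) := ⟨1, by omega⟩ with hi1
  set i2 : Fin (n+1) := ⟨2, by omega⟩ with hi2
  have h01 : i0 ≠ i1 := by simp [hi0, hi1, Fin.ext_iff]
  have h12 : i1 ≠ i2 := by simp [hi1, hi2, Fin.ext_iff]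
  have h02 : i0 ≠ i2 := by simp [hi0, hi2, Fin.ext_iff]
  have v0 : (i0 : ℕ) = 0 := rfl
  have v1 : (i1 : ℕ) = 1 := rfl
  have v2 : (i2 : ℕ) = 2 := rfl
  set I : Set (Expo n) :=
    {α | (∃ i : Fin (n+1), 3 ≤ (i:ℕ) ∧ 1 ≤ α i) ∨ d + 1 ≤ α i2 ∨ (α i2 = d ∧ B ≤ α i1)}
    with hI
  have hmemI : ∀ α : Expo n,
      α ∈ I ↔ (∃ i : Fin (n+1), 3 ≤ (i:ℕ) ∧ 1 ≤ α i) ∨ d + 1 ≤ α i2 ∨ (α i2 = d ∧ B ≤ α i1) :=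
    fun α => Iff.rfl
  -- terms in I and their support
  have hnotI : ∀ σ : Expo n, σ ∉ I →
      (∀ i : Fin (n+1), 3 ≤ (i:ℕ) → σ i = 0) ∧ σ i2 ≤ d ∧ ¬(σ i2 = d ∧ B ≤ σ i1) := by
    intro σ hσ
    rw [hmemI] at hσ
    push_neg at hσ
    obtain ⟨hA, hB', hC⟩ := hσ
    exact ⟨fun i hi => by have := hA i hi; omega, by omega, by
      intro ⟨hx, hy⟩; exact absurd hy (by have := hC hx; omega)⟩
  have hdeg3 : ∀ σ : Expo n, (∀ i : Fin (n+1), 3 ≤ (i:ℕ) → σ i = 0) →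
      deg σ = σ i0 + σ i1 + σ i2 := fun σ h3 => deg3 hn σ h3
  refine ⟨I, ⟨?_, ?_⟩, ?_, ?_, ?_⟩
  · -- IsMonIdeal
    intro α hα γ
    rw [hmemI] at hα ⊢
    have hadd : ∀ i, (α + γ) i = α i + γ i := fun i => rfl
    rcases hα with ⟨i, hi3, hi1'⟩ | h2 | ⟨ha, hb⟩
    · exact Or.inl ⟨i, hi3, by rw [hadd]; omega⟩
    · exact Or.inr (Or.inl (by rw [hadd]; omega))
    · rcases Nat.eq_zero_or_pos (γ i2) with hz | hpos
      · exact Or.inr (Or.inr ⟨by rw [hadd]; omega, by rw [hadd]; omega⟩)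
      · exact Or.inr (Or.inl (by rw [hadd]; omega))
  · -- IsBorelSet
    intro α β hα hmv
    obtain ⟨j, k, hk1, heq⟩ := hmv
    have hjk : j ≠ k := by intro h; rw [h] at hk1; omega
    have hco : ∀ i : Fin (n+1), α i + (if i = j then 1 else 0) = β i + (if i = k then 1 else 0) := by
      intro i
      have := congrFun heq i
      simpa [sing_apply] using this
    have hβj : β j = α j + 1 := by
      have h := hco j; rw [if_pos rfl, if_neg hjk] at h; omega
    have hval : ∀ i : Fin (n+1), i ≠ j → i ≠ k → β i = α i := by
      intro i hij hik
      have h := hco i; rw [if_neg hij, if_neg hik] at h; omega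
    have v0 : (i0 : ℕ) = 0 := rfl
    have v1 : (i1 : ℕ) = 1 := rfl
    have v2 : (i2 : ℕ) = 2 := rfl
    rw [hmemI] at hα ⊢
    rcases hα with ⟨i, hi3, hip⟩ | h2 | ⟨ha, hb⟩
    · rcases eq_or_ne i k with rfl | hik
      · exact Or.inl ⟨j, by omega, by omega⟩
      · refine Or.inl ⟨i, hi3, ?_⟩
        rcases eq_or_ne i j with rfl | hij
        · omega
        · rw [hval i hij hik]; omega
    · rcases eq_or_ne i2 k with hk2 | hk2
      · refine Or.inl ⟨j, by rw [← hk2] at hk1; omega, by omega⟩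
      · rcases eq_or_ne i2 j with hj2 | hj2
        · subst hj2; exact Or.inr (Or.inl (by omega))
        · exact Or.inr (Or.inl (by rw [hval i2 hj2 hk2]; omega))
    · rcases (by omega : (k : ℕ) = 0 ∨ (k : ℕ) = 1 ∨ (k : ℕ) = 2 ∨ 3 ≤ (k : ℕ)) with hkv | hkv | hkv | hkv
      · -- j = i1
        have hji : j = i1 := Fin.ext (by omega)
        refine Or.inr (Or.inr ⟨?_, ?_⟩)
        · rw [hval i2 (by rw [hji]; exact h12.symm) (fun h => by rw [h] at v2; omega)]; exact ha
        · rw [hji] at hβj; omega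
      · -- j = i2
        have hji : j = i2 := Fin.ext (by omega)
        rw [hji] at hβj
        exact Or.inr (Or.inl (by omega))
      · -- k = i2, j val 3
        exact Or.inl ⟨j, by omega, by omega⟩
      · -- k val ≥ 3
        have hne1j : i1 ≠ j := Fin.ne_of_val_ne (by omega)
        have hne1k : i1 ≠ k := Fin.ne_of_val_ne (by omega)
        have hne2j : i2 ≠ j := Fin.ne_of_val_ne (by omega)
        have hne2k : i2 ≠ k := Fin.ne_of_val_ne (by omega)
        refine Or.inr (Or.inr ⟨?_, ?_⟩)
        · rw [hval i2 hne2j hne2k]; exact ha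
        · rw [hval i1 hne1j hne1k]; exact hb
  · -- IsSaturatedIdeal
    intro α hsat
    obtain ⟨k, hk⟩ := hsat i0
    have hkk : ∀ i : Fin (n+1), i ≠ i0 → (α + k • sing i0) i = α i := by
      intro i hi
      have : (α + k • sing i0) i = α i + k * sing i0 i := by
        simp [Pi.add_apply, Pi.smul_apply, smul_eq_mul]
      rw [this, sing_apply, if_neg hi, mul_zero, add_zero]
    rw [hmemI] at hk ⊢
    rcases hk with ⟨i, hi3, hip⟩ | h2 | ⟨ha, hb⟩
    · have hne : i ≠ i0 := Fin.ne_of_val_ne (by omega)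
      rw [hkk i hne] at hip
      exact Or.inl ⟨i, hi3, hip⟩
    · rw [hkk i2 h02.symm] at h2
      exact Or.inr (Or.inl h2)
    · rw [hkk i2 h02.symm] at ha
      rw [hkk i1 h01.symm] at hb
      exact Or.inr (Or.inr ⟨ha, hb⟩)
  · -- IsGenSegment
    intro α hα σ hdegσ hgb hminσ
    have hσI : σ ∉ I := by
      intro hσI
      apply hgb
      rw [IsMinGen] at hminσ
      push_neg at hminσ
      obtain ⟨β, γ, hbg, hβ, hγ0⟩ := hminσ hσI
      have hγd : 1 ≤ deg γ := by
        obtain ⟨i, hi⟩ := Function.ne_iff.mp hγ0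
        have := single_le_deg γ i
        simp only [Pi.zero_apply] at hi
        omega
      refine ⟨β, γ, hβ, ?_, hbg.symm⟩
      rw [← hdegσ, ← hbg, deg_add]
      omega
    obtain ⟨hs3, hs2, hsd⟩ := hnotI σ hσI
    rcases hα.1 with ⟨i, hi3, hip⟩ | h2 | ⟨ha, hb⟩
    · -- α = sing i
      have hsum : sing i + (fun l => α l - sing i l) = α := by
        funext l
        show sing i l + (α l - sing i l) = α l
        rcases eq_or_ne l i with rfl | hl
        · rw [sing_apply, if_pos rfl]; omega
        · rw [sing_apply, if_neg hl]; omega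
      have hmem : sing i ∈ I := Or.inl ⟨i, hi3, by rw [sing_apply, if_pos rfl]⟩
      have hz := hα.2 (sing i) _ hsum hmem
      have hαeq : α = sing i := by rw [← hsum, hz, add_zero]
      have hdα : deg α = 1 := by rw [hαeq, deg_sing]
      obtain ⟨l, hl1, hl0⟩ := deg_one σ (by rw [hdegσ, hdα])
      have hll : (l : ℕ) ≤ 2 := by
        by_contra hc
        have := hs3 l (by omega)
        omega
      refine ⟨l, ?_, ?_⟩
      · rw [hαeq, sing_apply, if_neg (Fin.ne_of_val_ne (by omega : (l:ℕ) ≠ (i:ℕ)))]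
        omega
      · intro m hm
        have hmv : (m:ℕ) < (l:ℕ) := Fin.lt_def.mp hm
        rw [hαeq, sing_apply, if_neg (Fin.ne_of_val_ne (by omega : (m:ℕ) ≠ (i:ℕ)))]
        exact hl0 m (Fin.ne_of_val_ne (by omega))
    · -- α = x2^(d+1)
      set αc : Expo n := fun l => if l = i2 then d + 1 else 0 with hαc
      have hc0 : αc i0 = 0 := by simp [hαc, h02]
      have hc1 : αc i1 = 0 := by simp [hαc, h12]
      have hc2 : αc i2 = d + 1 := by simp [hαc]
      have hc3 : ∀ i : Fin (n+1), 3 ≤ (i:ℕ) → αc i = 0 := by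
        intro i hi
        simp [hαc, if_neg (Fin.ne_of_val_ne (by omega : (i:ℕ) ≠ (i2:ℕ)))]
      have hsum : αc + (fun l => α l - αc l) = α := by
        funext l
        show αc l + (α l - αc l) = α l
        rcases eq_or_ne l i2 with rfl | hl
        · rw [hc2]; omega
        · have : αc l = 0 := by simp [hαc, hl]
          rw [this]; omega
      have hmem : αc ∈ I := Or.inr (Or.inl (le_of_eq hc2.symm))
      have hz := hα.2 αc _ hsum hmem
      have hαeq : α = αc := by rw [← hsum, hz, add_zero]
      have hdα : deg α = d + 1 := by rw [hαeq, hdeg3 αc hc3, hc0, hc1, hc2]; omega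
      have hdσ : σ i0 + σ i1 + σ i2 = d + 1 := by rw [← hdeg3 σ hs3, hdegσ, hdα]
      rcases Nat.eq_zero_or_pos (σ i0) with h0 | h0
      · refine ⟨i1, ?_, ?_⟩
        · rw [hαeq, hc1]; omega
        · intro m hm
          have hmv : (m:ℕ) < (i1:ℕ) := Fin.lt_def.mp hm
          have hm0 : m = i0 := Fin.ext (by omega)
          rw [hm0, hαeq, hc0, h0]
      · refine ⟨i0, by rw [hαeq, hc0]; omega, fun m hm => ?_⟩
        have hmv : (m:ℕ) < (i0:ℕ) := Fin.lt_def.mp hm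
        omega
    · -- α = x2^d x1^B
      set αc : Expo n := fun l => if l = i2 then d else if l = i1 then B else 0 with hαc
      have hc0 : αc i0 = 0 := by simp [hαc, h02, h01]
      have hc1 : αc i1 = B := by simp [hαc, h12]
      have hc2 : αc i2 = d := by simp [hαc]
      have hc3 : ∀ i : Fin (n+1), 3 ≤ (i:ℕ) → αc i = 0 := by
        intro i hi
        simp [hαc, if_neg (Fin.ne_of_val_ne (by omega : (i:ℕ) ≠ (i2:ℕ))),
          if_neg (Fin.ne_of_val_ne (by omega : (i:ℕ) ≠ (i1:ℕ)))]
      have hsum : αc + (fun l => α l - αc l) = α := by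
        funext l
        show αc l + (α l - αc l) = α l
        rcases eq_or_ne l i2 with rfl | hl2
        · rw [hc2]; omega
        · rcases eq_or_ne l i1 with rfl | hl1
          · rw [hc1]; omega
          · have : αc l = 0 := by simp [hαc, hl2, hl1]
            rw [this]; omega
      have hmem : αc ∈ I := Or.inr (Or.inr ⟨hc2, le_of_eq hc1.symm⟩)
      have hz := hα.2 αc _ hsum hmem
      have hαeq : α = αc := by rw [← hsum, hz, add_zero]
      have hdα : deg α = d + B := by rw [hαeq, hdeg3 αc hc3, hc0, hc1, hc2]; omega
      have hdσ : σ i0 + σ i1 + σ i2 = d + B := by rw [← hdeg3 σ hs3, hdegσ, hdα]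
      rcases Nat.eq_zero_or_pos (σ i0) with h0 | h0
      · have hσ2 : σ i2 ≠ d := by
          intro hdd
          exact hsd ⟨hdd, by omega⟩
        refine ⟨i1, ?_, ?_⟩
        · rw [hαeq, hc1]; omega
        · intro m hm
          have hmv : (m:ℕ) < (i1:ℕ) := Fin.lt_def.mp hm
          have hm0 : m = i0 := Fin.ext (by omega)
          rw [hm0, hαeq, hc0, h0]
      · refine ⟨i0, by rw [hαeq, hc0]; omega, fun m hm => ?_⟩
        have hmv : (m:ℕ) < (i0:ℕ) := Fin.lt_def.mp hm
        omega
  · -- HasHilbPoly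
    refine ⟨d + B, fun t ht => ?_⟩
    set F : Finset (Σ _ : ℕ, ℕ) :=
      (Finset.range (d+1)).sigma (fun j => Finset.range (if j < d then t + 1 - j else B)) with hF
    set f : Expo n → Σ _ : ℕ, ℕ := fun α => ⟨α i2, α i1⟩ with hf
    have hio : Set.InjOn f (coIdeal I t) := by
      intro x hx y hy hxy
      obtain ⟨hdx, hxI⟩ := hx
      obtain ⟨hdy, hyI⟩ := hy
      obtain ⟨hx3, -, -⟩ := hnotI x hxI
      obtain ⟨hy3, -, -⟩ := hnotI y hyI
      have h2 : x i2 = y i2 := congrArg Sigma.fst hxy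
      have h1 : x i1 = y i1 := eq_of_heq (Sigma.mk.inj_iff.mp hxy).2
      have e1 := hdeg3 x hx3
      have e2 := hdeg3 y hy3
      rw [hdx] at e1
      rw [hdy] at e2
      funext l
      rcases (by omega : (l:ℕ) = 0 ∨ (l:ℕ) = 1 ∨ (l:ℕ) = 2 ∨ 3 ≤ (l:ℕ)) with hlv | hlv | hlv | hlv
      · rw [show l = i0 from Fin.ext hlv]; omega
      · rw [show l = i1 from Fin.ext hlv]; exact h1
      · rw [show l = i2 from Fin.ext hlv]; exact h2
      · rw [hx3 l hlv, hy3 l hlv]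
    have himg : f '' (coIdeal I t) = ↑F := by
      ext ⟨j, k⟩
      simp only [Set.mem_image, Finset.mem_coe, hF, Finset.mem_sigma, Finset.mem_range]
      constructor
      · rintro ⟨x, ⟨hdx, hxI⟩, hfx⟩
        obtain ⟨hx3, hx2, hxd⟩ := hnotI x hxI
        have hj : x i2 = j := congrArg Sigma.fst hfx
        have hk : x i1 = k := eq_of_heq (Sigma.mk.inj_iff.mp hfx).2
        have hpair := pair_le_deg x h12
        rw [hdx] at hpair
        refine ⟨by omega, ?_⟩
        by_cases hjd : j < d
        · rw [if_pos hjd]; omega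
        · rw [if_neg hjd]
          have hBk : ¬ (B ≤ x i1) := fun hB => hxd ⟨by omega, hB⟩
          omega
      · rintro ⟨hj, hk⟩
        set x : Expo n := fun i => if (i:ℕ) = 0 then t - j - k else
          if (i:ℕ) = 1 then k else if (i:ℕ) = 2 then j else 0 with hx
        have hx0 : x i0 = t - j - k := rfl
        have hx1 : x i1 = k := rfl
        have hx2 : x i2 = j := rfl
        have hx3 : ∀ i : Fin (n+1), 3 ≤ (i:ℕ) → x i = 0 := by
          intro i hi
          simp only [hx]
          rw [if_neg (by omega), if_neg (by omega), if_neg (by omega)]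
        have hjkt : j + k ≤ t := by
          by_cases hjd : j < d
          · rw [if_pos hjd] at hk; omega
          · rw [if_neg hjd] at hk; omega
        have hdx : deg x = t := by rw [hdeg3 x hx3, hx0, hx1, hx2]; omega
        have hxI : x ∉ I := by
          intro hmem
          rw [hmemI] at hmem
          rcases hmem with ⟨i, hi3, hip⟩ | h | ⟨ha, hb⟩
          · rw [hx3 i hi3] at hip; omega
          · rw [hx2] at h; omega
          · rw [hx2] at ha
            rw [hx1] at hb
            rw [if_neg (by omega)] at hk
            omega
        refine ⟨x, ⟨hdx, hxI⟩, ?_⟩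
        show (⟨x i2, x i1⟩ : Σ _ : ℕ, ℕ) = ⟨j, k⟩
        rw [hx1, hx2]
    have hcard : (coIdeal I t).ncard = F.card := by
      rw [← Set.ncard_coe_finset, ← himg, Set.ncard_image_of_injOn hio]
    have hFcard : F.card = (∑ j ∈ Finset.range d, (t + 1 - j)) + B := by
      rw [hF, Finset.card_sigma]
      simp only [Finset.card_range]
      rw [Finset.sum_range_succ, if_neg (lt_irrefl d)]
      congr 1
      exact Finset.sum_congr rfl (fun j hj => if_pos (Finset.mem_range.mp hj))
    have hsum : ((∑ j ∈ Finset.range d, (t + 1 - j) : ℕ) : ℚ)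
        = ∑ j ∈ Finset.range d, ((t:ℚ) + 1 - (j:ℚ)) := by
      rw [Nat.cast_sum]
      refine Finset.sum_congr rfl (fun j hj => ?_)
      have hjt : j ≤ t + 1 := by
        have := Finset.mem_range.mp hj
        omega
      rw [Nat.cast_sub hjt]
      push_cast
      ring
    have hgauss : (∑ j ∈ Finset.range d, (j:ℚ)) * 2 = (d:ℚ) * ((d:ℚ) - 1) := by
      have h2 := Finset.sum_range_id_mul_two d
      have h3 := congrArg (fun m : ℕ => (m : ℚ)) h2
      simp only [Nat.cast_mul, Nat.cast_sum] at h3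
      rw [Nat.cast_sub (by omega : 1 ≤ d)] at h3
      simpa using h3
    have hBq : 2 * (B:ℚ) = ((d:ℚ) - 1) * ((d:ℚ) - 2) - 2 * (g:ℚ) := by
      exact_mod_cast hB2
    rw [hp]
    simp only [eval_add, eval_mul, eval_C, eval_X]
    rw [hcard, hFcard]
    rw [Nat.cast_add, hsum, Finset.sum_sub_distrib, Finset.sum_const, Finset.card_range,
      nsmul_eq_mul]
    linear_combination (1/2 : ℚ) * hBq - (1/2 : ℚ) * hgauss
end
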